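/- Let δ be the ℚ-linear derivation of ℚ⟨C⟩ determined by δ(C_k) = −C_{k+1} for all k ≥ 1 (this corresponds to the operation p ↦ [p,a] on Lie polynomials). Then for every p ∈ ℚ⟨C⟩, ma(δ(p)) = dur(ma(p)). -/

import Mathlib

/-!
Moulds are modelled as families `P = (P_r)_{r ≥ 0}` of ℚ-valued functions of `r`
rational variables; identities of rational functions are expressed as pointwise
identities, guarded (where divisions genuinely occur) by the genericity
condition that all consecutive block sums of the variables are nonzero.
-/

/-- A mould: for each depth `r`, a function of `r` variables `u_1, …, u_r`. -/
abbrev Mould : Type := (r : ℕ) → (Fin r → ℚ) → ℚ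

namespace Mould

/-- Membership in `ARI`: vanishing constant term (depth-0 part equal to `0`). -/
def MemARI (P : Mould) : Prop := ∀ u : Fin 0 → ℚ, P 0 u = 0

/-- The first `i` letters of the word `u`. -/
def take {r : ℕ} (u : Fin r → ℚ) (i : ℕ) (h : i ≤ r) : Fin i → ℚ :=
  fun j => u ⟨j.1, by have := j.2; omega⟩

/-- The letters of the word `u` from position `i` on. -/
def drop {r : ℕ} (u : Fin r → ℚ) (i : ℕ) : Fin (r - i) → ℚ :=
  fun j => u ⟨i + j.1, by have := j.2; omega⟩

/-- Mould multiplication `mu`. -/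
def mu (P Q : Mould) : Mould := fun r u =>
  ∑ i : Fin (r + 1), P i.1 (take u i.1 (by have := i.2; omega)) * Q (r - i.1) (drop u i.1)

/-- The bracket `lu` associated to `mu`. -/
def lu (P Q : Mould) : Mould := fun r u => mu P Q r u - mu Q P r u

/-- `dur`: multiplication by `u_1 + ⋯ + u_r`. -/
def dur (P : Mould) : Mould := fun r u => (∑ j, u j) * P r u

/-- `dar`: multiplication by `u_1 ⋯ u_r`. -/
def dar (P : Mould) : Mould := fun r u => (∏ j, u j) * P r u

/-- `dur⁻¹`: division by `u_1 + ⋯ + u_r`. -/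
def durInv (P : Mould) : Mould := fun r u => P r u / (∑ j, u j)

/-- `dar⁻¹`: division by `u_1 ⋯ u_r`. -/
def darInv (P : Mould) : Mould := fun r u => P r u / (∏ j, u j)

/-- `Δ = dar ∘ dur`: multiplication by `u_1 ⋯ u_r (u_1 + ⋯ + u_r)`. -/
def delta (P : Mould) : Mould := dar (dur P)

/-- `Δ⁻¹`: division by `u_1 ⋯ u_r (u_1 + ⋯ + u_r)`. -/
def deltaInv (P : Mould) : Mould := darInv (durInv P)

/-- The word `a⌈c`, for the decomposition `a = (u_1,…,u_i)`, `b = (u_{i+1},…,u_k)`,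
`c = (u_{k+1},…,u_r)` (0-indexed: `a` = positions `< i`, `b` = positions `i..k-1`,
`c` = positions `k..r-1`): `a` followed by `c` with the sum of the letters of `b`
added to the first letter of `c`. -/
def flexUpper {r : ℕ} (u : Fin r → ℚ) (i k : ℕ) (hik : i < k) (hkr : k < r) :
    Fin (i + (r - k)) → ℚ := fun j =>
  if hj : j.1 < i then u ⟨j.1, by omega⟩
  else if hj2 : j.1 = i then ∑ m : Fin (k + 1 - i), u ⟨i + m.1, by have := m.2; omega⟩
  else u ⟨k + (j.1 - i), by have := j.2; omega⟩

/-- The word `a⌉c`: `a` with the sum of the letters of `b` added to its last letter,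
followed by `c`. -/
def flexLower {r : ℕ} (u : Fin r → ℚ) (i k : ℕ) (hi : 0 < i) (hik : i < k) (hkr : k ≤ r) :
    Fin (i + (r - k)) → ℚ := fun j =>
  if hj : j.1 < i - 1 then u ⟨j.1, by omega⟩
  else if hj2 : j.1 = i - 1 then
    ∑ m : Fin (k - (i - 1)), u ⟨(i - 1) + m.1, by have := m.2; omega⟩
  else u ⟨k + (j.1 - i), by have := j.2; omega⟩

/-- The middle word `b = (u_{i+1},…,u_k)` of a decomposition. -/
def blockWord {r : ℕ} (u : Fin r → ℚ) (i k : ℕ) (h : k ≤ r) : Fin (k - i) → ℚ :=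
  fun m => u ⟨i + m.1, by have := m.2; omega⟩

/-- Ecalle's derivation `arit(P)` applied to `M`:
`(arit(P)·M)(u) = Σ M(a⌈c)P(b) − Σ M(a⌉c)P(b)`, the first sum over decompositions
with `b, c` nonempty, the second over decompositions with `a, b` nonempty. -/
def arit (P M : Mould) : Mould := fun r u =>
  (∑ i : Fin (r + 1), ∑ k : Fin (r + 1),
    if h : i.1 < k.1 ∧ k.1 < r then
      M (i.1 + (r - k.1)) (flexUpper u i.1 k.1 h.1 h.2)
        * P (k.1 - i.1) (blockWord u i.1 k.1 (le_of_lt h.2))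
    else 0)
  - ∑ i : Fin (r + 1), ∑ k : Fin (r + 1),
    if h : 0 < i.1 ∧ i.1 < k.1 ∧ k.1 ≤ r then
      M (i.1 + (r - k.1)) (flexLower u i.1 k.1 h.1 h.2.1 h.2.2)
        * P (k.1 - i.1) (blockWord u i.1 k.1 h.2.2)
    else 0

/-- `Darit(P) = −dar ∘ (arit(Δ⁻¹(P)) − ad(Δ⁻¹(P))) ∘ dar⁻¹`, where `ad(X)·Y = lu(X,Y)`. -/
def Darit (P Q : Mould) : Mould := fun r u =>
  -(dar (fun s v => arit (deltaInv P) (darInv Q) s v - lu (deltaInv P) (darInv Q) s v) r u)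

/-- The `ari`-bracket: `ari(P,Q) = arit(Q)·P − arit(P)·Q + lu(P,Q)`. -/
def ari (P Q : Mould) : Mould := fun r u =>
  arit Q P r u - arit P Q r u + lu P Q r u

/-- The `Dari`-bracket: `Dari(P,Q) = Darit(P)·Q − Darit(Q)·P`. -/
def Dari (P Q : Mould) : Mould := fun r u => Darit P Q r u - Darit Q P r u

/-- The `push` operator: `push(P)(u_1,…,u_r) = P(−u_1−⋯−u_r, u_1,…,u_{r−1})`. -/
def push (P : Mould) : Mould := fun r u =>
  P r (fun j => if j.1 = 0 then -(∑ k, u k) else u ⟨j.1 - 1, by have := j.2; omega⟩)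

/-- The `swap` operator: `swap(P)(v_1,…,v_r) = P(v_r, v_{r−1}−v_r, …, v_1−v_2)`. -/
def swap (P : Mould) : Mould := fun r u =>
  P r (fun j =>
    if hj : j.1 = 0 then u ⟨r - 1, by have := j.2; omega⟩
    else u ⟨r - 1 - j.1, by have := j.2; omega⟩ - u ⟨r - j.1, by have := j.2; omega⟩)

/-- The mould `B = ma(b)` concentrated in depth 1, with `B(u_1) = 1`. -/
def Bm : Mould := fun r _ => if r = 1 then 1 else 0

/-- The mould `B₁ = ma([b,a])` concentrated in depth 1, with `B₁(u_1) = u_1`. -/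
def B1 : Mould := fun r u => if h : r = 1 then u ⟨0, by omega⟩ else 0

/-- A tuple of variables is *generic* when every consecutive block sum
`u_{i+1} + ⋯ + u_{j+1}` (`0 ≤ i ≤ j < r`) is nonzero; two rational-function
valued moulds are equal iff they agree at all generic tuples, and all
denominators occurring in the flexion operations are such block sums. -/
def Generic {r : ℕ} (u : Fin r → ℚ) : Prop :=
  ∀ (i j : ℕ) (_ : i ≤ j) (_ : j < r),
    (∑ m : Fin (j + 1 - i), u ⟨i + m.1, by have := m.2; omega⟩) ≠ 0

/-- A mould is polynomial-valued if each of its components is (the evaluation of)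
a polynomial. -/
def IsPolynomial (P : Mould) : Prop :=
  ∀ r : ℕ, ∃ p : MvPolynomial (Fin r) ℚ, ∀ u : Fin r → ℚ, P r u = MvPolynomial.eval u p

/-- The truncated word `(u_1,…,u_{r-1})`. -/
def init {r : ℕ} (u : Fin r → ℚ) : Fin (r - 1) → ℚ := take u (r - 1) (Nat.sub_le r 1)

/-- The shifted word `(u_2,…,u_r)`. -/
def tail {r : ℕ} (u : Fin r → ℚ) : Fin (r - 1) → ℚ := drop u 1

/-- The word `(u_2, …, u_{r−1}, −u_1−⋯−u_{r−1})`. -/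
def pushTail {r : ℕ} (u : Fin r → ℚ) : Fin (r - 1) → ℚ := fun j =>
  if j.1 = r - 2 then -(∑ m : Fin (r - 1), u ⟨m.1, by have := m.2; omega⟩)
  else u ⟨j.1 + 1, by have := j.2; omega⟩

end Mould

namespace Mould

/-- The mould associated to a word `w = (n_1, …, n_r)` in the generators
(the letter `n` standing for the generator `C_{n+1}`): it is concentrated in
depth `r = length w` where its value is `(−1)^{n_1+⋯+n_r} u_1^{n_1} ⋯ u_r^{n_r}`,
i.e. the monomial `C_{k_1} ⋯ C_{k_r}` (`k_j = n_j + 1`) goes to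
`(−1)^{k_1+⋯+k_r−r} u_1^{k_1−1} ⋯ u_r^{k_r−1}`. -/
def wordMould (w : List ℕ) : Mould := fun r u =>
  if h : r = w.length then
    ∏ j : Fin r, ((-1 : ℚ) ^ (w.get ⟨j.1, by have := j.2; omega⟩)
      * u j ^ (w.get ⟨j.1, by have := j.2; omega⟩))
  else 0

/-- `ℚ⟨C⟩`, the free associative `ℚ`-algebra on countably many generators
`C_1, C_2, C_3, …` (the index `n : ℕ` corresponds to the generator `C_{n+1}`). -/
abbrev QC : Type := FreeAlgebra ℚ ℕ

/-- The generator `C_k` (for `k ≥ 1`) of `ℚ⟨C⟩`. -/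
noncomputable def Cgen (k : ℕ) : QC := FreeAlgebra.ι ℚ (k - 1)

/-- The linear map `ma` from `ℚ⟨C⟩` to moulds: it sends `1` to the mould equal
to `1` in depth 0 and `0` in positive depths, and the monomial `C_{k_1} ⋯ C_{k_r}`
to the mould concentrated in depth `r` with value
`(−1)^{k_1+⋯+k_r−r} u_1^{k_1−1} ⋯ u_r^{k_r−1}`. -/
noncomputable def ma (f : QC) : Mould := fun r u =>
  Finsupp.sum
    (((FreeAlgebra.equivMonoidAlgebraFreeMonoid (R := ℚ) (X := ℕ)) f).coeff :
      FreeMonoid ℕ →₀ ℚ)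
    (fun w c => c * wordMould (FreeMonoid.toList w) r u)

end Mould

namespace MaAux
open Mould

noncomputable def prodι : List ℕ → QC
  | [] => 1
  | n :: t => FreeAlgebra.ι ℚ n * prodι t

lemma e_prodι (l : List ℕ) :
    FreeAlgebra.equivMonoidAlgebraFreeMonoid (R := ℚ) (X := ℕ) (prodι l)
      = MonoidAlgebra.single (FreeMonoid.ofList l) 1 := by
  induction l with
  | nil => simp [prodι, MonoidAlgebra.one_def]
  | cons n t ih =>
      rw [prodι, map_mul, ih]
      rw [show FreeAlgebra.equivMonoidAlgebraFreeMonoid (R := ℚ) (X := ℕ) (FreeAlgebra.ι ℚ n)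
            = MonoidAlgebra.single (FreeMonoid.of n) 1 by
          simp [FreeAlgebra.equivMonoidAlgebraFreeMonoid]]
      rw [MonoidAlgebra.single_mul_single, one_mul, FreeMonoid.ofList_cons]

lemma wordMould_set (l : List ℕ) (i : Fin l.length) (u : Fin l.length → ℚ) :
    wordMould (l.set i.1 (l.get i + 1)) l.length u = -u i * wordMould l l.length u := by
  simp only [wordMould, List.length_set]
  rw [dif_pos trivial, dif_pos trivial]
  rw [← Finset.mul_prod_erase _ _ (Finset.mem_univ i),
      ← Finset.mul_prod_erase _ _ (Finset.mem_univ i)]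
  have herase : ∀ j ∈ Finset.univ.erase i,
      ((-1 : ℚ) ^ ((l.set i.1 (l.get i + 1)).get ⟨j.1, by simp [j.2]⟩)
        * u j ^ ((l.set i.1 (l.get i + 1)).get ⟨j.1, by simp [j.2]⟩))
      = ((-1 : ℚ) ^ (l.get ⟨j.1, j.2⟩) * u j ^ (l.get ⟨j.1, j.2⟩)) := by
    intro j hj
    have hne : i.1 ≠ j.1 := fun h => (Finset.mem_erase.mp hj).1 (Fin.ext h.symm)
    simp [List.get_eq_getElem, List.getElem_set, hne]
  rw [Finset.prod_congr rfl herase]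
  have hi : (l.set i.1 (l.get i + 1)).get ⟨i.1, by simp [i.2]⟩ = l.get i + 1 := by
    simp [List.get_eq_getElem, List.getElem_set]
  rw [hi, pow_succ, pow_succ]
  ring

noncomputable def maL (r : ℕ) (u : Fin r → ℚ) : QC →ₗ[ℚ] ℚ :=
  (Finsupp.linearCombination ℚ
      (fun w : FreeMonoid ℕ => wordMould (FreeMonoid.toList w) r u)).comp
    ((MonoidAlgebra.coeffLinearEquiv ℚ).toLinearMap.comp (FreeAlgebra.equivMonoidAlgebraFreeMonoid (R := ℚ) (X := ℕ)).toLinearMap)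

lemma ma_eq_maL (f : QC) (r : ℕ) (u : Fin r → ℚ) : ma f r u = maL r u f := by
  simp [ma, maL, Finsupp.linearCombination_apply, Finsupp.sum, smul_eq_mul,
    AlgEquiv.toLinearMap_apply]

lemma maL_prodι (l : List ℕ) (r : ℕ) (u : Fin r → ℚ) :
    maL r u (prodι l) = wordMould l r u := by
  rw [← ma_eq_maL]
  unfold ma
  rw [e_prodι, MonoidAlgebra.coeff_single, Finsupp.sum_single_index (by simp), one_mul, FreeMonoid.toList_ofList]

section Deriv
variable (δ : QC →ₗ[ℚ] QC)
    (hleibniz : ∀ x y : QC, δ (x * y) = δ x * y + x * δ y)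
    (hδ : ∀ k : ℕ, 1 ≤ k → δ (Cgen k) = -Cgen (k + 1))

include hleibniz in
lemma δ_one : δ 1 = 0 := by
  have h := hleibniz 1 1
  simp only [mul_one, one_mul] at h
  exact (left_eq_add.mp h)

include hδ in
lemma δ_ι (n : ℕ) : δ (FreeAlgebra.ι ℚ n) = -(FreeAlgebra.ι ℚ (n + 1)) := by
  have h := hδ (n + 1) (by omega)
  simpa [Cgen] using h

include hleibniz hδ in
lemma δ_prodι (l : List ℕ) :
    δ (prodι l) = -(∑ i : Fin l.length, prodι (l.set i.1 (l.get i + 1))) := by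
  induction l with
  | nil => simp [prodι, δ_one δ hleibniz]
  | cons n t ih =>
      rw [prodι, hleibniz, δ_ι δ hδ, ih]
      have hc : ∀ (m : ℕ) (s : List ℕ),
          prodι (m :: s) = FreeAlgebra.ι ℚ m * prodι s := fun _ _ => rfl
      simp only [List.length_cons, Fin.sum_univ_succ, Fin.val_succ, Fin.val_zero,
        List.set_cons_succ, List.set_cons_zero, List.get_eq_getElem,
        List.getElem_cons_succ, List.getElem_cons_zero, hc]
      rw [mul_neg, Finset.mul_sum]
      abel_nf
      simp [Nat.add_comm]
      exact add_comm _ _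

include hleibniz hδ in
lemma key (l : List ℕ) (r : ℕ) (u : Fin r → ℚ) :
    maL r u (δ (prodι l)) = (∑ j, u j) * maL r u (prodι l) := by
  rw [δ_prodι δ hleibniz hδ, map_neg, map_sum, maL_prodι]
  simp only [maL_prodι]
  by_cases h : r = l.length
  · subst h
    have : ∀ i : Fin l.length, wordMould (l.set i.1 (l.get i + 1)) l.length u
        = -u i * wordMould l l.length u := fun i => wordMould_set l i u
    rw [Finset.sum_congr rfl (fun i _ => this i)]
    simp only [neg_mul, Finset.sum_neg_distrib, neg_neg]
    rw [← Finset.sum_mul]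
  · have h1 : wordMould l r u = 0 := by simp [wordMould, h]
    have h2 : ∀ i : Fin l.length, wordMould (l.set i.1 (l.get i + 1)) r u = 0 := by
      intro i
      simp only [wordMould, List.length_set]
      rw [dif_neg h]
    rw [Finset.sum_congr rfl (fun i _ => h2 i), h1]
    simp

end Deriv
end MaAux

open Mould in
/-- Let `δ` be the `ℚ`-linear derivation of `ℚ⟨C⟩` determined
by `δ(C_k) = −C_{k+1}` for all `k ≥ 1` (corresponding to the operation
`p ↦ [p,a]` on Lie polynomials). Then for every `p ∈ ℚ⟨C⟩`,
`ma(δ(p)) = dur(ma(p))`. -/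
theorem ma_deriv_eq_dur (δ : QC →ₗ[ℚ] QC)
    (hleibniz : ∀ x y : QC, δ (x * y) = δ x * y + x * δ y)
    (hδ : ∀ k : ℕ, 1 ≤ k → δ (Cgen k) = -Cgen (k + 1)) (p : QC) :
    ma (δ p) = dur (ma p) := by
  funext r u
  show ma (δ p) r u = dur (ma p) r u
  rw [dur, MaAux.ma_eq_maL, MaAux.ma_eq_maL]
  have main : ∀ q : MonoidAlgebra ℚ (FreeMonoid ℕ),
      MaAux.maL r u (δ ((FreeAlgebra.equivMonoidAlgebraFreeMonoid (R := ℚ) (X := ℕ)).symm q))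
        = (∑ j, u j) * MaAux.maL r u
            ((FreeAlgebra.equivMonoidAlgebraFreeMonoid (R := ℚ) (X := ℕ)).symm q) := by
    intro q
    induction q using MonoidAlgebra.induction_linear with
    | zero => simp
    | add f g hf hg =>
        rw [map_add, map_add, map_add, map_add, hf, hg]
        ring
    | single w c =>
        have hw : (MonoidAlgebra.single w c : MonoidAlgebra ℚ (FreeMonoid ℕ))
            = c • MonoidAlgebra.single w (1 : ℚ) := by
          rw [MonoidAlgebra.smul_single']
          rw [mul_one]
        have hsym : (FreeAlgebra.equivMonoidAlgebraFreeMonoid (R := ℚ) (X := ℕ)).symm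
            (MonoidAlgebra.single w (1 : ℚ)) = MaAux.prodι (FreeMonoid.toList w) := by
          apply (FreeAlgebra.equivMonoidAlgebraFreeMonoid (R := ℚ) (X := ℕ)).injective
          rw [AlgEquiv.apply_symm_apply, MaAux.e_prodι, FreeMonoid.ofList_toList]
        rw [hw, map_smul, hsym, map_smul, map_smul, map_smul]
        rw [MaAux.key δ hleibniz hδ]
        simp [smul_eq_mul]
        ring
  have hp := main ((FreeAlgebra.equivMonoidAlgebraFreeMonoid (R := ℚ) (X := ℕ)) p)
  rwa [AlgEquiv.symm_apply_apply] at hp
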